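/- arXiv:1208.5755 — 3 statements merged into one kernel-verified Lean document; each statement's English description precedes it below -/
import Mathlib

section
/- The statistic based on the union of all minimum spanning trees (uMST) on subjects equals Σ_{k=1}^K n_{ak}·n_{bk} + Σ_{(u,v)∈M₀*} (n_{au}·n_{bv} + n_{av}·n_{bu}), where M₀* is the set of edges appearing in at least one MST on categories. -/
open scoped Classical

/-- Number of edges of the graph `t` joining vertices with different labels. -/
noncomputable def crossCount {V : Type*} [Fintype V] (g : V → Bool) (t : SimpleGraph V) : ℕ :=
  (t.edgeFinset.filter fun e => ∃ i j, e = s(i, j) ∧ g i ≠ g j).card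

/-- Total weight of a graph (half the sum over darts of the symmetric weight). -/
noncomputable def treeWeight {V : Type*} [Fintype V] (w : V → V → ℚ) (t : SimpleGraph V) : ℚ :=
  (∑ d : t.Dart, w d.toProd.1 d.toProd.2) / 2

/-- `t` is a minimum spanning tree for the weight `w`. -/
def IsMSTree {V : Type*} [Fintype V] (w : V → V → ℚ) (t : SimpleGraph V) : Prop :=
  t.IsTree ∧ ∀ t' : SimpleGraph V, t'.IsTree → treeWeight w t ≤ treeWeight w t'

/-- The union of all minimum spanning trees: an edge is present iff it belongs to some MST. -/
def unionMST {V : Type*} [Fintype V] (w : V → V → ℚ) : SimpleGraph V where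
  Adj i j := ∃ t : SimpleGraph V, IsMSTree w t ∧ t.Adj i j
  symm := ⟨fun i j ⟨t, ht, h⟩ => ⟨t, ht, h.symm⟩⟩
  loopless := ⟨fun i ⟨t, _, h⟩ => t.loopless.irrefl i h⟩

open Finset SimpleGraph
set_option linter.unusedSectionVars false
set_option linter.unusedVariables false
set_option linter.unnecessarySimpa false
set_option maxHeartbeats 1000000

namespace RuMSTAux

variable {V : Type*} [Fintype V]

lemma isolated_reachable {G : SimpleGraph V} {x y : V}
    (h : ∀ z, ¬ G.Adj x z) (hr : G.Reachable x y) : x = y := by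
  obtain ⟨p⟩ := hr
  cases p with
  | nil => rfl
  | cons ha _ => exact absurd ha (h _)

lemma exists_boundary {G : SimpleGraph V} {P : V → Prop} :
    ∀ {x y : V} (_ : G.Walk x y), P x → ¬ P y → ∃ a b, G.Adj a b ∧ P a ∧ ¬ P b := by
  intro x y p
  induction p with
  | nil => intro h h'; exact absurd h h'
  | @cons a c y ha q ih =>
    intro hx hy
    by_cases hz : P c
    · exact ih hz hy
    · exact ⟨_, _, ha, hx, hz⟩

lemma del_adj {G : SimpleGraph V} {x y u v : V} :
    (G \ fromEdgeSet {s(x,y)}).Adj u v ↔ G.Adj u v ∧ s(u,v) ≠ s(x,y) := by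
  simp only [sdiff_adj, fromEdgeSet_adj, Set.mem_singleton_iff]
  constructor
  · rintro ⟨h, h2⟩; exact ⟨h, fun he => h2 ⟨he, h.ne⟩⟩
  · rintro ⟨h, h2⟩; exact ⟨h, fun he => h2 he.1⟩

lemma del_edgeSet {G : SimpleGraph V} {e : Sym2 V} :
    (G \ fromEdgeSet {e}).edgeSet = G.edgeSet \ {e} := by
  rw [edgeSet_sdiff, edgeSet_fromEdgeSet, edgeSet_sdiff_sdiff_isDiag]

lemma walk_reach_del {G : SimpleGraph V} {x y : V} :
    ∀ {a b : V}, G.Walk a b →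
      (G \ fromEdgeSet {s(x,y)}).Reachable a b ∨
      ((G \ fromEdgeSet {s(x,y)}).Reachable a x ∧ (G \ fromEdgeSet {s(x,y)}).Reachable b y) ∨
      ((G \ fromEdgeSet {s(x,y)}).Reachable a y ∧ (G \ fromEdgeSet {s(x,y)}).Reachable b x) := by
  intro a b p
  induction p with
  | nil => exact Or.inl (Reachable.refl _)
  | @cons a c b ha q ih =>
    by_cases he : s(a,c) = s(x,y)
    · rw [Sym2.eq_iff] at he
      rcases he with ⟨rfl, rfl⟩ | ⟨rfl, rfl⟩
      · -- a = x, c = y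
        rcases ih with h | ⟨h1, h2⟩ | ⟨h1, h2⟩
        · exact Or.inr (Or.inl ⟨Reachable.refl _, h.symm⟩)
        · exact Or.inr (Or.inl ⟨Reachable.refl _, h2⟩)
        · exact Or.inl h2.symm
      · -- a = y, c = x
        rcases ih with h | ⟨h1, h2⟩ | ⟨h1, h2⟩
        · exact Or.inr (Or.inr ⟨Reachable.refl _, h.symm⟩)
        · exact Or.inl h2.symm
        · exact Or.inr (Or.inr ⟨Reachable.refl _, h2⟩)
    · have hac : (G \ fromEdgeSet {s(x,y)}).Adj a c := del_adj.2 ⟨ha, he⟩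
      rcases ih with h | ⟨h1, h2⟩ | ⟨h1, h2⟩
      · exact Or.inl (hac.reachable.trans h)
      · exact Or.inr (Or.inl ⟨hac.reachable.trans h1, h2⟩)
      · exact Or.inr (Or.inr ⟨hac.reachable.trans h1, h2⟩)

lemma reach_del_patch {G : SimpleGraph V} {x y : V}
    (hr : (G \ fromEdgeSet {s(x,y)}).Reachable x y) :
    ∀ {a b : V}, G.Walk a b → (G \ fromEdgeSet {s(x,y)}).Reachable a b := by
  intro a b p
  rcases walk_reach_del (x := x) (y := y) p with h | ⟨h1, h2⟩ | ⟨h1, h2⟩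
  · exact h
  · exact (h1.trans hr).trans h2.symm
  · exact (h1.trans hr.symm).trans h2.symm


lemma exists_spanning_tree_aux :
    ∀ (n : ℕ) (G : SimpleGraph V), G.edgeSet.ncard ≤ n → G.Connected →
      ∃ t, t ≤ G ∧ t.IsTree := by
  intro n
  induction n with
  | zero =>
    intro G hcard hG
    have hb : G = ⊥ := by
      rw [← edgeSet_eq_empty]
      exact Set.ncard_eq_zero (Set.toFinite _) |>.mp (Nat.le_zero.mp hcard)
    refine ⟨G, le_rfl, hG, ?_⟩
    rw [hb]; exact isAcyclic_bot
  | succ n ih =>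
    intro G hcard hG
    by_cases ha : G.IsAcyclic
    · exact ⟨G, le_rfl, hG, ha⟩
    · rw [IsAcyclic] at ha
      push_neg at ha
      obtain ⟨v, cw, hc⟩ := ha
      cases cw with
      | nil => exact absurd hc (by simp [Walk.isCycle_def])
      | @cons _ u _ hadj q =>
        have hmem : s(v, u) ∈ (Walk.cons hadj q).edges := by
          rw [Walk.edges_cons]; exact List.mem_cons_self
        have hnb : ¬ G.IsBridge s(v, u) := by
          rw [isBridge_iff_adj_and_forall_cycle_notMem hadj]
          push_neg
          exact ⟨v, Walk.cons hadj q, hc, hmem⟩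
        rw [isBridge_iff] at hnb
        push_neg at hnb
        have hr := hnb
        set G' := G \ fromEdgeSet {s(v,u)} with hG'
        have hG'conn : G'.Connected := by
          have hpre : G'.Preconnected := by
            intro a b
            obtain ⟨p⟩ := hG.preconnected a b
            exact reach_del_patch hr p
          haveI := hG.nonempty
          exact Connected.mk hpre
        have hsub : G'.edgeSet ⊂ G.edgeSet := by
          rw [del_edgeSet]
          exact Set.sdiff_singleton_ssubset.mpr hadj
        have hlt : G'.edgeSet.ncard ≤ n := by
          have := Set.ncard_lt_ncard hsub (Set.toFinite _)
          omega
        obtain ⟨t, ht1, ht2⟩ := ih G' hlt hG'conn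
        exact ⟨t, ht1.trans sdiff_le, ht2⟩


lemma exists_spanning_tree (G : SimpleGraph V) (hG : G.Connected) :
    ∃ t, t ≤ G ∧ t.IsTree :=
  exists_spanning_tree_aux G.edgeSet.ncard G le_rfl hG

lemma isTree_of_connected_of_card {G : SimpleGraph V} [Fintype G.edgeSet] (hG : G.Connected)
    (hcard : G.edgeFinset.card + 1 = Fintype.card V) : G.IsTree := by
  obtain ⟨t, hle, ht⟩ := exists_spanning_tree G hG
  have hsub : t.edgeFinset ⊆ G.edgeFinset := by
    intro e he
    rw [mem_edgeFinset] at he ⊢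
    exact edgeSet_mono hle he
  have hc2 := ht.card_edgeFinset
  have : t.edgeFinset = G.edgeFinset :=
    Finset.eq_of_subset_of_card_le hsub (by omega)
  have : t = G := by
    rwa [← edgeSet_inj, ← Set.toFinset_inj]
  exact this ▸ ht

/-- the star graph on `V` centred at `v0` -/
private def star (v0 : V) : SimpleGraph V where
  Adj x y := (x = v0 ∨ y = v0) ∧ x ≠ y
  symm := ⟨by intro x y ⟨h1, h2⟩; exact ⟨h1.symm, h2.symm⟩⟩
  loopless := ⟨by intro x ⟨h1, h2⟩; exact h2 rfl⟩

lemma exists_isTree [Nonempty V] : ∃ t : SimpleGraph V, t.IsTree := by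
  obtain ⟨v0⟩ := ‹Nonempty V›
  have key : ∀ z, (star v0).Reachable z v0 := by
    intro z
    by_cases hz : z = v0
    · exact hz ▸ Reachable.refl _
    · exact (Adj.reachable (⟨Or.inr rfl, hz⟩ : (star v0).Adj z v0))
  have hpre : (star v0).Preconnected := fun x y => (key x).trans (key y).symm
  refine ⟨star v0, ⟨Connected.mk hpre, ?_⟩⟩
  · -- acyclic
    rw [isAcyclic_iff_forall_adj_isBridge]
    intro a b hab
    rw [isBridge_iff]
    refine fun hr => ?_
    obtain ⟨h1, hne⟩ := hab
    rcases h1 with rfl | rfl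
    · -- a = v0, b isolated in deleted graph
      have hiso : ∀ z, ¬ (star a \ fromEdgeSet {s(a,b)}).Adj b z := by
        intro z hz
        rw [del_adj] at hz
        obtain ⟨⟨h3, h4⟩, h5⟩ := hz
        rcases h3 with rfl | rfl
        · exact hne rfl
        · exact h5 (Sym2.eq_swap)
      exact hne (isolated_reachable hiso hr.symm).symm
    · -- b = v0, a isolated
      have hiso : ∀ z, ¬ (star b \ fromEdgeSet {s(a,b)}).Adj a z := by
        intro z hz
        rw [del_adj] at hz
        obtain ⟨⟨h3, h4⟩, h5⟩ := hz
        rcases h3 with rfl | rfl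
        · exact hne rfl
        · exact h5 rfl
      exact hne (isolated_reachable hiso hr)

lemma exists_isMSTree [Nonempty V] (w : V → V → ℚ) :
    ∃ t, (t.IsTree ∧ ∀ t' : SimpleGraph V, t'.IsTree → treeWeight w t ≤ treeWeight w t') := by
  obtain ⟨t0, ht0⟩ := exists_isTree (V := V)
  obtain ⟨t, hts, hmin⟩ := Finset.exists_min_image
    ((univ : Finset (SimpleGraph V)).filter (fun t => t.IsTree)) (treeWeight w)
    ⟨t0, by simp [ht0]⟩
  rw [Finset.mem_filter] at hts
  exact ⟨t, hts.2, fun t' ht' => hmin t' (by simp [ht'])⟩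

lemma treeWeight_eq_sum (w : V → V → ℚ) (hs : ∀ x y, w x y = w y x) (t : SimpleGraph V)
    [Fintype t.edgeSet] :
    treeWeight w t = ∑ e ∈ t.edgeFinset, Sym2.lift ⟨w, hs⟩ e := by
  rw [treeWeight, div_eq_iff (two_ne_zero), mul_comm]
  have h1 : ∀ d : t.Dart, w d.toProd.1 d.toProd.2 = Sym2.lift ⟨w, hs⟩ d.edge := by
    intro d; rfl
  rw [Finset.sum_congr rfl (fun d _ => h1 d)]
  rw [← Finset.sum_fiberwise_of_maps_to (g := SimpleGraph.Dart.edge)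
      (t := t.edgeFinset) (fun d _ => by rw [mem_edgeFinset]; exact d.edge_mem)]
  rw [two_mul, ← Finset.sum_add_distrib]
  refine Finset.sum_congr rfl ?_
  intro e he
  have hfib : ∀ d ∈ Finset.univ.filter (fun d : t.Dart => d.edge = e),
      Sym2.lift ⟨w, hs⟩ d.edge = Sym2.lift ⟨w, hs⟩ e := by
    intro d hd
    rw [Finset.mem_filter] at hd
    rw [hd.2]
  rw [Finset.sum_congr rfl hfib, Finset.sum_const, nsmul_eq_mul]
  have hcard : (Finset.univ.filter (fun d : t.Dart => d.edge = e)).card = 2 := by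
    have := t.dart_edge_fiber_card e (by rwa [← mem_edgeFinset])
    convert this using 2
  rw [hcard]
  push_cast
  ring


lemma my_card_edges (G : SimpleGraph V) [Fintype G.edgeSet] (s : Finset (Sym2 V))
    (h : ∀ e, e ∈ G.edgeSet ↔ e ∈ s) : G.edgeFinset.card = s.card := by
  congr 1
  ext e
  rw [mem_edgeFinset]
  exact h e

lemma my_sum_edges (G : SimpleGraph V) [Fintype G.edgeSet] (f : Sym2 V → ℚ)
    (s : Finset (Sym2 V)) (h : ∀ e, e ∈ G.edgeSet ↔ e ∈ s) :
    ∑ e ∈ G.edgeFinset, f e = ∑ e ∈ s, f e := by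
  apply Finset.sum_congr _ (fun _ _ => rfl)
  ext e
  rw [mem_edgeFinset]
  exact h e

/-- The graph of edges lighter than the cutoff. -/
def lightG (w : V → V → ℚ) (cut : ℚ) : SimpleGraph V where
  Adj i j := i ≠ j ∧ w i j < cut ∧ w j i < cut
  symm := ⟨fun i j ⟨h1, h2, h3⟩ => ⟨h1.symm, h3, h2⟩⟩
  loopless := ⟨fun i h => h.1 rfl⟩

lemma lightG_adj {w : V → V → ℚ} {cut : ℚ} {i j : V} :
    (lightG w cut).Adj i j ↔ i ≠ j ∧ w i j < cut ∧ w j i < cut := Iff.rfl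

lemma light_transfer {G : SimpleGraph V} {w : V → V → ℚ} {cut : ℚ} :
    ∀ {a b : V} (p : G.Walk a b),
      (∀ dd ∈ p.darts, w dd.toProd.1 dd.toProd.2 < cut ∧ w dd.toProd.2 dd.toProd.1 < cut) →
      (lightG w cut).Reachable a b := by
  intro a b p
  induction p with
  | nil => intro _; exact Reachable.refl _
  | @cons a c b ha q ih =>
    intro hd
    have h1 := hd ⟨(a, c), ha⟩ (by rw [Walk.darts_cons]; exact List.mem_cons_self)
    have hlt : (lightG w cut).Adj a c := ⟨ha.ne, h1.1, h1.2⟩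
    exact hlt.reachable.trans (ih fun dd hdd =>
      hd dd (by rw [Walk.darts_cons]; exact List.mem_cons_of_mem _ hdd))

/-- Common construction: replace the edge `s(u,v)` of the tree `t` by the edge `s(a,b)`. -/
lemma swap_isTree_weight (w : V → V → ℚ) (hs : ∀ x y, w x y = w y x)
    {t : SimpleGraph V} (htt : t.IsTree) {u v a b : V} (huv : t.Adj u v) (hne : a ≠ b)
    (hnadj : ¬ (t \ fromEdgeSet {s(u,v)}).Adj a b)
    (hconn : ((t \ fromEdgeSet {s(u,v)}) ⊔ edge a b).Connected) :
    ((t \ fromEdgeSet {s(u,v)}) ⊔ edge a b).IsTree ∧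
      treeWeight w ((t \ fromEdgeSet {s(u,v)}) ⊔ edge a b)
        = treeWeight w t - w u v + w a b := by
  set G' := t \ fromEdgeSet {s(u,v)} with hG'def
  have huvmem : s(u,v) ∈ t.edgeFinset := mem_edgeFinset.2 huv
  have hmem2 : ∀ e, e ∈ (G' ⊔ edge a b).edgeSet ↔ e ∈ insert s(a,b) (t.edgeFinset.erase s(u,v)) := by
    intro e
    simp only [edgeSet_sup, Set.mem_union, edge_edgeSet_of_ne hne, Set.mem_singleton_iff,
      Finset.mem_insert, Finset.mem_erase, mem_edgeFinset, hG'def, del_edgeSet, Set.mem_diff]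
    tauto
  have hnm : s(a,b) ∉ t.edgeFinset.erase s(u,v) := by
    simp only [Finset.mem_erase, mem_edgeFinset, mem_edgeSet]
    rintro ⟨h1, h2⟩
    exact hnadj (del_adj.2 ⟨h2, h1⟩)
  constructor
  · apply isTree_of_connected_of_card hconn
    rw [my_card_edges _ _ hmem2, Finset.card_insert_of_notMem hnm,
      Finset.card_erase_of_mem huvmem]
    have h1 := htt.card_edgeFinset
    have h2 : 0 < t.edgeFinset.card := Finset.card_pos.2 ⟨_, huvmem⟩
    omega
  · rw [treeWeight_eq_sum w hs, treeWeight_eq_sum w hs,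
      my_sum_edges _ _ _ hmem2, Finset.sum_insert hnm, Finset.sum_erase_eq_sub huvmem]
    simp only [Sym2.lift_mk]
    ring

theorem not_light_of_MST {w : V → V → ℚ} (hs : ∀ x y, w x y = w y x) {t : SimpleGraph V}
    (htt : t.IsTree) (hmin : ∀ t' : SimpleGraph V, t'.IsTree → treeWeight w t ≤ treeWeight w t')
    {x y : V} (hadj : t.Adj x y) : ¬ (lightG w (w x y)).Reachable x y := by
  intro hr
  obtain ⟨p⟩ := hr
  set G' := t \ fromEdgeSet {s(x,y)} with hG'def
  have hbridge : ¬ G'.Reachable x y := by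
    have hb := (isAcyclic_iff_forall_adj_isBridge.mp htt.2) hadj
    rw [isBridge_iff] at hb
    exact hb
  obtain ⟨a, b, habL, hPa, hPb⟩ :=
    exists_boundary (P := fun z => G'.Reachable x z) p (Reachable.refl x) hbridge
  obtain ⟨hneab, hwab, -⟩ := habL
  have hG'ab : ¬ G'.Adj a b := fun h => hPb (hPa.trans h.reachable)
  have hdi : ∀ z, G'.Reachable z x ∨ G'.Reachable z y := by
    intro z
    obtain ⟨q⟩ := htt.1.preconnected z x
    rcases walk_reach_del (x := x) (y := y) q with h | ⟨h1, h2⟩ | ⟨h1, h2⟩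
    · exact Or.inl h
    · exact Or.inl h1
    · exact Or.inr h1
  have hby : G'.Reachable b y := by
    rcases hdi b with h | h
    · exact absurd h.symm hPb
    · exact h
  set t₂ := G' ⊔ edge a b with ht₂def
  have hle : G' ≤ t₂ := le_sup_left
  have hxy₂ : t₂.Reachable x y := by
    have h1 : t₂.Reachable x a := (hPa.mono hle)
    have h2 : t₂.Adj a b := Or.inr ((edge_adj a b a b).2 ⟨Or.inl ⟨rfl, rfl⟩, hneab⟩)
    have h3 : t₂.Reachable b y := hby.mono hle
    exact (h1.trans h2.reachable).trans h3
  have hconn : t₂.Connected := by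
    have hpre : t₂.Preconnected := by
      intro z z'
      have hz : ∀ z, t₂.Reachable z x := by
        intro z
        rcases hdi z with h | h
        · exact h.mono hle
        · exact (h.mono hle).trans hxy₂.symm
      exact (hz z).trans (hz z').symm
    haveI : Nonempty V := ⟨x⟩
    exact Connected.mk hpre
  obtain ⟨htree₂, hw₂⟩ := swap_isTree_weight w hs htt hadj hneab hG'ab hconn
  have := hmin t₂ htree₂
  rw [hw₂] at this
  linarith

theorem exists_MST_adj [Nonempty V] {w : V → V → ℚ} (hs : ∀ x y, w x y = w y x) {x y : V}
    (hxy : x ≠ y) (hnr : ¬ (lightG w (w x y)).Reachable x y) :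
    ∃ t : SimpleGraph V, (t.IsTree ∧
      ∀ t' : SimpleGraph V, t'.IsTree → treeWeight w t ≤ treeWeight w t') ∧ t.Adj x y := by
  obtain ⟨t, htt, hmin⟩ := exists_isMSTree w
  by_cases hadj : t.Adj x y
  · exact ⟨t, ⟨htt, hmin⟩, hadj⟩
  -- take the unique path from x to y in t
  obtain ⟨p0⟩ := htt.1.preconnected x y
  set p := p0.toPath.val with hpdef
  have hp : p.IsPath := p0.toPath.prop
  -- find a heavy dart on p
  have hheavy : ∃ dd ∈ p.darts, w x y ≤ w dd.toProd.1 dd.toProd.2 := by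
    by_contra hno
    push_neg at hno
    exact hnr (light_transfer p fun dd hdd =>
      ⟨hno dd hdd, by rw [hs]; exact hno dd hdd⟩)
  obtain ⟨dd, hddmem, hwge⟩ := hheavy
  set u := dd.toProd.1 with hu
  set v := dd.toProd.2 with hv
  have huv : t.Adj u v := dd.adj
  have hedge : s(u,v) ∈ p.edges := by
    have : dd.edge ∈ p.edges := by
      rw [Walk.edges]
      exact List.mem_map_of_mem hddmem
    exact this
  set G' := t \ fromEdgeSet {s(u,v)} with hG'def
  rcases walk_reach_del (x := u) (y := v) p with hcase | hcase | hcase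
  · -- impossible: would give a second x-y path avoiding s(u,v)
    exfalso
    obtain ⟨q0⟩ := hcase
    have hq0 : ∀ e ∈ q0.edges, e ∈ G'.edgeSet := fun e he => q0.edges_subset_edgeSet he
    have hle' : G' ≤ t := sdiff_le
    obtain ⟨q, hqe⟩ : ∃ q : t.Walk x y, s(u,v) ∉ q.edges := by
      refine ⟨q0.map (SimpleGraph.Hom.ofLE hle'), ?_⟩
      intro hmem
      rw [Walk.edges_map] at hmem
      obtain ⟨e, he, heq⟩ := List.mem_map.mp hmem
      have := hq0 e he
      rw [del_edgeSet] at this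
      apply this.2
      rw [← heq] at *
      simpa [Hom.coe_ofLE, Sym2.map_id'] using heq
    have hpq : p = (q.toPath : t.Walk x y) := by
      have := htt.2.path_unique ⟨p, hp⟩ q.toPath
      exact congrArg Subtype.val this
    rw [hpq] at hedge
    exact hqe (Walk.edges_toPath_subset q hedge)
  all_goals {
    -- hcase : reachabilities linking {x,y} to {u,v} in G'
    obtain ⟨h1, h2⟩ := hcase
    have hG'xy : ¬ G'.Adj x y := fun h => hadj (del_adj.mp h).1
    set t₂ := G' ⊔ edge x y with ht₂def
    have hle : G' ≤ t₂ := le_sup_left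
    have hedge₂ : t₂.Adj x y := Or.inr ((edge_adj x y x y).2 ⟨Or.inl ⟨rfl, rfl⟩, hxy⟩)
    have hdi : ∀ z, G'.Reachable z u ∨ G'.Reachable z v := by
      intro z
      obtain ⟨q⟩ := htt.1.preconnected z u
      rcases walk_reach_del (x := u) (y := v) q with h | ⟨ha1, ha2⟩ | ⟨ha1, ha2⟩
      · exact Or.inl h
      · exact Or.inl ha1
      · exact Or.inr ha1
    have hconn : t₂.Connected := by
      have hall : ∀ z, t₂.Reachable z x := by
        intro z
        rcases hdi z with h | h
        · first
          | exact (h.mono hle).trans ((h1.mono hle).symm)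
          | exact ((h.mono hle).trans ((h2.mono hle).symm)).trans hedge₂.reachable.symm
        · first
          | exact (h.mono hle).trans ((h1.mono hle).symm)
          | exact ((h.mono hle).trans ((h2.mono hle).symm)).trans hedge₂.reachable.symm
      haveI : Nonempty V := ⟨x⟩
      exact Connected.mk fun z z' => (hall z).trans (hall z').symm
    obtain ⟨htree₂, hw₂⟩ := swap_isTree_weight w hs htt huv hxy hG'xy hconn
    refine ⟨t₂, ⟨htree₂, fun t' ht' => ?_⟩, hedge₂⟩
    have := hmin t' ht'
    rw [hw₂]
    linarith }


theorem unionMST_adj_iff [Nonempty V] {w : V → V → ℚ} (hs : ∀ x y, w x y = w y x) (x y : V) :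
    (unionMST w).Adj x y ↔ x ≠ y ∧ ¬ (lightG w (w x y)).Reachable x y := by
  constructor
  · rintro ⟨t, ⟨htt, hmin⟩, hadj⟩
    exact ⟨hadj.ne, not_light_of_MST hs htt hmin hadj⟩
  · rintro ⟨h1, h2⟩
    obtain ⟨t, hmst, hadj⟩ := exists_MST_adj hs h1 h2
    exact ⟨t, hmst, hadj⟩

section Transfer

variable {K N : ℕ} (c : Fin N → Fin K) (d : Fin K → Fin K → ℚ)

lemma proj_reach {cut : ℚ} :
    ∀ {a b : Fin N} (_ : (lightG (fun x y => d (c x) (c y)) cut).Walk a b),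
      (lightG d cut).Reachable (c a) (c b) := by
  intro a b p
  induction p with
  | nil => exact Reachable.refl _
  | @cons a a' b ha q ih =>
    obtain ⟨hne, h1, h2⟩ := ha
    by_cases hc : c a = c a'
    · exact hc ▸ ih
    · exact (Adj.reachable (⟨hc, h1, h2⟩ : (lightG d cut).Adj (c a) (c a'))).trans ih

lemma lift_reach {cut : ℚ} (hcut : 0 < cut) (hdiag : ∀ u, d u u = 0)
    (hrep : ∀ k, ∃ x, c x = k) :
    ∀ {u v : Fin K} (_ : (lightG d cut).Walk u v) {x y : Fin N}, c x = u → c y = v →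
      (lightG (fun x y => d (c x) (c y)) cut).Reachable x y := by
  intro u v q
  induction q with
  | nil =>
    intro x y hx hy
    by_cases hxy : x = y
    · exact hxy ▸ Reachable.refl _
    · refine Adj.reachable ⟨hxy, ?_, ?_⟩ <;>
        (show d _ _ < cut; rw [hx, hy, hdiag]; exact hcut)
  | @cons u u' v ha q ih =>
    intro x y hx hy
    obtain ⟨x', hx'⟩ := hrep u'
    obtain ⟨hne, h1, h2⟩ := ha
    have hadj : (lightG (fun x y => d (c x) (c y)) cut).Adj x x' := by
      refine ⟨?_, ?_, ?_⟩
      · intro h; apply hne; rw [← hx, ← hx', h]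
      · show d _ _ < cut; rw [hx, hx']; exact h1
      · show d _ _ < cut; rw [hx, hx']; exact h2
    exact hadj.reachable.trans (ih hx' hy)

theorem charA (hN : 0 < N) (hsymm : ∀ u v, d u v = d v u) (hdiag : ∀ u, d u u = 0)
    (hpos : ∀ u v, u ≠ v → 0 < d u v) (hrep : ∀ k, ∃ x, c x = k) (x y : Fin N) :
    (unionMST (fun x y => d (c x) (c y))).Adj x y ↔
      x ≠ y ∧ (c x = c y ∨ (unionMST d).Adj (c x) (c y)) := by
  haveI : Nonempty (Fin N) := ⟨⟨0, hN⟩⟩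
  haveI : Nonempty (Fin K) := ⟨c ⟨0, hN⟩⟩
  have hd0 : ∀ u v, 0 ≤ d u v := by
    intro u v
    by_cases h : u = v
    · rw [h, hdiag]
    · exact (hpos u v h).le
  have hWs : ∀ x y : Fin N, d (c x) (c y) = d (c y) (c x) := fun x y => hsymm _ _
  rw [unionMST_adj_iff hWs]
  by_cases hc : c x = c y
  · constructor
    · rintro ⟨h1, -⟩
      exact ⟨h1, Or.inl hc⟩
    · rintro ⟨h1, -⟩
      refine ⟨h1, fun hr => ?_⟩
      obtain ⟨p⟩ := hr
      cases p with
      | nil => exact h1 rfl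
      | cons ha q =>
        have h2 := ha.2.1
        have h3 : d (c x) (c y) = 0 := by rw [hc, hdiag]
        rw [h3] at h2
        exact absurd (hd0 _ _) (not_le.mpr h2)
  · have hcut : 0 < d (c x) (c y) := hpos _ _ hc
    have hequiv : (lightG (fun x y => d (c x) (c y)) (d (c x) (c y))).Reachable x y ↔
        (lightG d (d (c x) (c y))).Reachable (c x) (c y) := by
      constructor
      · rintro ⟨p⟩; exact proj_reach c d p
      · rintro ⟨q⟩; exact lift_reach c d hcut hdiag hrep q rfl rfl
    rw [hequiv]
    have hM₀ := unionMST_adj_iff (w := d) hsymm (c x) (c y)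
    constructor
    · rintro ⟨h1, h2⟩
      exact ⟨h1, Or.inr (hM₀.mpr ⟨hc, h2⟩)⟩
    · rintro ⟨h1, hc2 | h2⟩
      · exact absurd hc2 hc
      · exact ⟨h1, (hM₀.mp h2).2⟩


end Transfer

/-- cross darts count is twice cross edges count -/
lemma crossDarts_card {V : Type*} [Fintype V] (g : V → Bool) (M : SimpleGraph V) :
    ((univ : Finset M.Dart).filter fun dd => g dd.toProd.1 ≠ g dd.toProd.2).card
      = 2 * crossCount g M := by
  classical
  set S := M.edgeFinset.filter (fun e => ∃ i j, e = s(i, j) ∧ g i ≠ g j) with hS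
  set CD := (univ : Finset M.Dart).filter (fun dd => g dd.toProd.1 ≠ g dd.toProd.2) with hCD
  have hmaps : ∀ dd ∈ CD, dd.edge ∈ S := by
    intro dd hdd
    rw [hCD, Finset.mem_filter] at hdd
    rw [hS, Finset.mem_filter, mem_edgeFinset]
    exact ⟨dd.edge_mem, dd.toProd.1, dd.toProd.2, rfl, hdd.2⟩
  rw [Finset.card_eq_sum_card_fiberwise hmaps]
  rw [crossCount, ← hS, Finset.sum_const_nat (m := 2), mul_comm]
  intro e he
  rw [hS, Finset.mem_filter] at he
  obtain ⟨hem, i, j, hij, hgij⟩ := he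
  have hfib : CD.filter (fun dd => dd.edge = e) = univ.filter (fun dd : M.Dart => dd.edge = e) := by
    ext dd
    simp only [hCD, Finset.mem_filter, Finset.mem_univ, true_and]
    refine ⟨fun h => h.2, fun h => ⟨?_, h⟩⟩
    have : s(dd.toProd.1, dd.toProd.2) = s(i, j) := by rw [← hij]; exact h
    rw [Sym2.eq_iff] at this
    rcases this with ⟨h1, h2⟩ | ⟨h1, h2⟩
    · rw [h1, h2]; exact hgij
    · rw [h1, h2]; exact fun hh => hgij (hh.symm)
  rw [hfib]
  have := M.dart_edge_fiber_card e (mem_edgeFinset.mp hem)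
  convert this using 2

lemma dartPairs {V : Type*} [Fintype V] (M : SimpleGraph V) (F : V → V → ℕ) :
    ∑ dd : M.Dart, F dd.toProd.1 dd.toProd.2
      = ∑ q ∈ (univ : Finset (V × V)).filter (fun q => M.Adj q.1 q.2), F q.1 q.2 := by
  classical
  refine Finset.sum_nbij (fun dd => dd.toProd) ?_ ?_ ?_ ?_
  · intro dd _
    simp only [Finset.mem_filter, Finset.mem_univ, true_and]
    exact dd.adj
  · intro d1 _ d2 _ h
    exact SimpleGraph.Dart.ext _ _ h
  · intro q hq
    rw [Finset.coe_filter] at hq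
    exact ⟨⟨q, hq.2⟩, by simp, rfl⟩
  · intro dd _
    rfl


section Count
variable {K N : ℕ} (c : Fin N → Fin K) (g : Fin N → Bool) (nA nB : Fin K → ℕ)

lemma pairs_card
    (hA : ∀ k, nA k = (Finset.univ.filter fun x => c x = k ∧ g x = true).card)
    (hB : ∀ k, nB k = (Finset.univ.filter fun x => c x = k ∧ g x = false).card)
    (u v : Fin K) :
    ((univ : Finset (Fin N × Fin N)).filter
        (fun p => c p.1 = u ∧ c p.2 = v ∧ g p.1 ≠ g p.2)).card
      = nA u * nB v + nB u * nA v := by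
  classical
  have hsplit : (univ : Finset (Fin N × Fin N)).filter
        (fun p => c p.1 = u ∧ c p.2 = v ∧ g p.1 ≠ g p.2)
      = ((univ.filter fun x => c x = u ∧ g x = true) ×ˢ
          (univ.filter fun y => c y = v ∧ g y = false)) ∪
        ((univ.filter fun x => c x = u ∧ g x = false) ×ˢ
          (univ.filter fun y => c y = v ∧ g y = true)) := by
    ext ⟨x, y⟩
    simp only [Finset.mem_filter, Finset.mem_union, Finset.mem_product, Finset.mem_univ,
      true_and]
    cases hgx : g x <;> cases hgy : g y <;> simp <;> tauto
  rw [hsplit, Finset.card_union_of_disjoint, Finset.card_product, Finset.card_product,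
    hA u, hB v, hB u, hA v]
  rw [Finset.disjoint_product]
  left
  rw [Finset.disjoint_filter]
  rintro x _ ⟨h1, h2⟩
  rw [h2]
  simp


end Count

section Main
variable {K N : ℕ}

theorem count_main (hN : 0 < N) (c : Fin N → Fin K) (g : Fin N → Bool)
    (d : Fin K → Fin K → ℚ) (nA nB : Fin K → ℕ)
    (hA : ∀ k, nA k = (Finset.univ.filter fun x => c x = k ∧ g x = true).card)
    (hB : ∀ k, nB k = (Finset.univ.filter fun x => c x = k ∧ g x = false).card)
    (hchar : ∀ x y, (unionMST (fun x y => d (c x) (c y))).Adj x y ↔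
      x ≠ y ∧ (c x = c y ∨ (unionMST d).Adj (c x) (c y))) :
    (crossCount g (unionMST (fun x y => d (c x) (c y))) : ℚ) =
      (∑ k, (nA k : ℚ) * (nB k : ℚ)) +
        (∑ dd : (unionMST d).Dart,
            ((nA dd.toProd.1 : ℚ) * (nB dd.toProd.2 : ℚ) +
              (nA dd.toProd.2 : ℚ) * (nB dd.toProd.1 : ℚ))) / 2 := by
  classical
  set M := unionMST (fun x y => d (c x) (c y)) with hM
  set M₀ := unionMST d with hM₀
  set P := (univ : Finset (Fin N × Fin N)).filter (fun p => M.Adj p.1 p.2 ∧ g p.1 ≠ g p.2)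
    with hP
  -- step 1 : P.card = 2 * crossCount
  have key1 : P.card = 2 * crossCount g M := by
    rw [← crossDarts_card g M]
    rw [Finset.card_filter, Finset.card_filter]
    have := dartPairs M (fun a b => if g a ≠ g b then 1 else 0)
    rw [this]
    rw [Finset.sum_filter]
    refine Finset.sum_congr rfl ?_
    intro q _
    by_cases h : M.Adj q.1 q.2 <;> simp [h]
  -- step 2 : split P
  set P₁ := (univ : Finset (Fin N × Fin N)).filter
    (fun p => c p.1 = c p.2 ∧ g p.1 ≠ g p.2) with hP₁
  set P₂ := (univ : Finset (Fin N × Fin N)).filter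
    (fun p => M₀.Adj (c p.1) (c p.2) ∧ g p.1 ≠ g p.2) with hP₂
  have key2 : P.card = P₁.card + P₂.card := by
    have hsplit : P = P₁ ∪ P₂ := by
      ext ⟨x, y⟩
      simp only [hP, hP₁, hP₂, Finset.mem_filter, Finset.mem_union, Finset.mem_univ, true_and]
      constructor
      · rintro ⟨hadj, hg⟩
        rcases (hchar x y).mp hadj with ⟨hne, h | h⟩
        · exact Or.inl ⟨h, hg⟩
        · exact Or.inr ⟨h, hg⟩
      · rintro (⟨h1, h2⟩ | ⟨h1, h2⟩)
        · exact ⟨(hchar x y).mpr ⟨fun he => h2 (he ▸ rfl), Or.inl h1⟩, h2⟩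
        · exact ⟨(hchar x y).mpr ⟨fun he => h2 (he ▸ rfl), Or.inr h1⟩, h2⟩
    rw [hsplit, Finset.card_union_of_disjoint]
    rw [Finset.disjoint_filter]
    rintro ⟨x, y⟩ _ ⟨h1, h2⟩ ⟨h3, h4⟩
    rw [h1] at h3
    exact M₀.irrefl h3
  -- step 3 : P₁
  have key3 : P₁.card = ∑ u : Fin K, (nA u * nB u + nB u * nA u) := by
    rw [Finset.card_eq_sum_card_fiberwise
      (f := fun p : Fin N × Fin N => c p.1) (t := univ) (fun p _ => Finset.mem_univ _)]
    refine Finset.sum_congr rfl ?_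
    intro u _
    have hfib : P₁.filter (fun p => c p.1 = u)
        = (univ : Finset (Fin N × Fin N)).filter
            (fun p => c p.1 = u ∧ c p.2 = u ∧ g p.1 ≠ g p.2) := by
      ext ⟨x, y⟩
      simp only [hP₁, Finset.mem_filter, Finset.mem_univ, true_and]
      constructor
      · rintro ⟨⟨h1, h2⟩, h3⟩
        exact ⟨h3, h3 ▸ h1.symm, h2⟩
      · rintro ⟨h1, h2, h3⟩
        exact ⟨⟨h1.trans h2.symm, h3⟩, h1⟩
    rw [hfib, pairs_card c g nA nB hA hB u u]
  -- step 4 : P₂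
  have key4 : P₂.card = ∑ dd : M₀.Dart, (nA dd.toProd.1 * nB dd.toProd.2
      + nB dd.toProd.1 * nA dd.toProd.2) := by
    rw [dartPairs M₀ (fun a b => nA a * nB b + nB a * nA b)]
    rw [Finset.card_eq_sum_card_fiberwise
      (f := fun p : Fin N × Fin N => (c p.1, c p.2))
      (t := (univ : Finset (Fin K × Fin K)).filter (fun q => M₀.Adj q.1 q.2)) ?_]
    · refine Finset.sum_congr rfl ?_
      intro q hq
      rw [Finset.mem_filter] at hq
      have hfib : P₂.filter (fun p => (c p.1, c p.2) = q)
          = (univ : Finset (Fin N × Fin N)).filter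
              (fun p => c p.1 = q.1 ∧ c p.2 = q.2 ∧ g p.1 ≠ g p.2) := by
        ext ⟨x, y⟩
        simp only [hP₂, Finset.mem_filter, Finset.mem_univ, true_and, Prod.ext_iff]
        constructor
        · rintro ⟨⟨h1, h2⟩, h3, h4⟩
          exact ⟨h3, h4, h2⟩
        · rintro ⟨h1, h2, h3⟩
          refine ⟨⟨?_, h3⟩, h1, h2⟩
          rw [h1, h2]
          exact hq.2
      rw [hfib, pairs_card c g nA nB hA hB q.1 q.2]
    · intro p hp
      rw [hP₂, Finset.mem_coe, Finset.mem_filter] at hp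
      rw [Finset.mem_coe, Finset.mem_filter]
      exact ⟨Finset.mem_univ _, hp.2.1⟩
  -- assemble
  have h1Q : (P₁.card : ℚ) = 2 * ∑ k, (nA k : ℚ) * (nB k : ℚ) := by
    rw [key3]
    push_cast
    rw [Finset.sum_add_distrib, two_mul]
    congr 1
    exact Finset.sum_congr rfl (fun u _ => mul_comm _ _)
  have h2Q : (P₂.card : ℚ) = ∑ dd : M₀.Dart,
      ((nA dd.toProd.1 : ℚ) * (nB dd.toProd.2 : ℚ) +
        (nA dd.toProd.2 : ℚ) * (nB dd.toProd.1 : ℚ)) := by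
    rw [key4]
    push_cast
    exact Finset.sum_congr rfl (fun dd _ => by ring)
  have hccQ : 2 * (crossCount g M : ℚ) = (P₁.card : ℚ) + (P₂.card : ℚ) := by
    have : (P.card : ℚ) = 2 * (crossCount g M : ℚ) := by exact_mod_cast congrArg Nat.cast key1
    rw [← this]
    exact_mod_cast congrArg Nat.cast key2
  rw [h1Q, h2Q] at hccQ
  linarith


end Main

end RuMSTAux

/-- The statistic based on the union of all minimum spanning trees on subjects:
the number of uMST edges joining subjects from different groups equals
`Σ_k n_{ak}·n_{bk} + Σ_{(u,v)∈M₀*} (n_{au}·n_{bv} + n_{av}·n_{bu})`, where `M₀*` is the set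
of edges appearing in at least one MST on the categories (the sum over unordered edges of
`M₀*` is written as half the sum over its darts). -/
theorem RuMST_formula (K N : ℕ) (hN : 0 < N) (c : Fin N → Fin K) (g : Fin N → Bool)
    (d : Fin K → Fin K → ℚ) (hsymm : ∀ u v, d u v = d v u) (hdiag : ∀ u, d u u = 0)
    (hpos : ∀ u v, u ≠ v → 0 < d u v)
    (m nA nB : Fin K → ℕ)
    (hm : ∀ k, m k = (Finset.univ.filter fun x => c x = k).card)
    (hA : ∀ k, nA k = (Finset.univ.filter fun x => c x = k ∧ g x = true).card)
    (hB : ∀ k, nB k = (Finset.univ.filter fun x => c x = k ∧ g x = false).card)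
    (hmk : ∀ k, 0 < m k) :
    (crossCount g (unionMST (fun x y => d (c x) (c y))) : ℚ) =
      (∑ k, (nA k : ℚ) * (nB k : ℚ)) +
        (∑ dd : (unionMST d).Dart,
            ((nA dd.toProd.1 : ℚ) * (nB dd.toProd.2 : ℚ) +
              (nA dd.toProd.2 : ℚ) * (nB dd.toProd.1 : ℚ))) / 2 := by
  have hrep : ∀ k, ∃ x, c x = k := by
    intro k
    have h := hmk k
    rw [hm k] at h
    obtain ⟨x, hx⟩ := Finset.card_pos.mp h
    exact ⟨x, (Finset.mem_filter.mp hx).2⟩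
  exact RuMSTAux.count_main hN c g d nA nB hA hB
    (fun x y => RuMSTAux.charA c d hN hsymm hdiag hpos hrep x y)
end

section
/- The permutation-null expectation of R_{C₀} = Σ_{k=1}^K 2 n_{ak} n_{bk}/m_k + Σ_{(u,v)∈C₀} (n_{au} n_{bv} + n_{av} n_{bu})/(m_u m_v) equals (N − K + |C₀|) · 2 n_a n_b/(N(N−1)). -/
open scoped Classical
open Finset

/-- Number of group-`a` subjects in category `k` under labeling `g`. -/
def aCnt {N K : ℕ} (c : Fin N → Fin K) (g : Fin N → Bool) (k : Fin K) : ℕ :=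
  (univ.filter fun x => c x = k ∧ g x = true).card

/-- Number of group-`b` subjects in category `k` under labeling `g`. -/
def bCnt {N K : ℕ} (c : Fin N → Fin K) (g : Fin N → Bool) (k : Fin K) : ℕ :=
  (univ.filter fun x => c x = k ∧ g x = false).card

/-- The statistic `R_{C₀} = Σ_k 2 n_{ak} n_{bk}/m_k
+ Σ_{(u,v)∈C₀} (n_{au} n_{bv} + n_{av} n_{bu})/(m_u m_v)` (the sum over unordered edges of
`C₀` written as half the sum over darts). -/
noncomputable def RC0 {N K : ℕ} (c : Fin N → Fin K) (C0 : SimpleGraph (Fin K))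
    (m : Fin K → ℕ) (g : Fin N → Bool) : ℚ :=
  (∑ k, 2 * (aCnt c g k : ℚ) * (bCnt c g k : ℚ) / (m k : ℚ)) +
    (∑ dd : C0.Dart,
        ((aCnt c g dd.toProd.1 : ℚ) * (bCnt c g dd.toProd.2 : ℚ) +
          (aCnt c g dd.toProd.2 : ℚ) * (bCnt c g dd.toProd.1 : ℚ)) /
          ((m dd.toProd.1 : ℚ) * (m dd.toProd.2 : ℚ))) / 2


lemma filter_perm_card {N : ℕ} (σ : Equiv.Perm (Fin N)) (p : Fin N → Prop) [DecidablePred p] :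
    ((univ : Finset (Fin N)).filter fun i => p (σ i)).card = (univ.filter p).card := by
  refine Finset.card_bij' (fun a _ => σ a) (fun b _ => σ.symm b) ?_ ?_ ?_ ?_ <;> simp

lemma pair_expand {N : ℕ} (g : Fin N → Bool) (A B : Finset (Fin N)) :
    (A.filter fun x => g x = true).card * (B.filter fun x => g x = false).card +
      (B.filter fun x => g x = true).card * (A.filter fun x => g x = false).card =
      ∑ x ∈ A, ∑ y ∈ B, (if g x ≠ g y then 1 else 0) := by
  have h : ∀ x y, (if g x ≠ g y then (1:ℕ) else 0) =
      (if g x = true then 1 else 0) * (if g y = false then 1 else 0) +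
      (if g x = false then 1 else 0) * (if g y = true then 1 else 0) := by
    intro x y; cases g x <;> cases g y <;> simp
  calc (A.filter fun x => g x = true).card * (B.filter fun x => g x = false).card +
      (B.filter fun x => g x = true).card * (A.filter fun x => g x = false).card
      = (∑ x ∈ A, if g x = true then 1 else 0) * (∑ y ∈ B, if g y = false then 1 else 0) +
        (∑ x ∈ A, if g x = false then 1 else 0) * (∑ y ∈ B, if g y = true then 1 else 0) := by
        rw [Finset.card_filter, Finset.card_filter, Finset.card_filter, Finset.card_filter]
        ring
    _ = ∑ x ∈ A, ∑ y ∈ B, ((if g x = true then 1 else 0) * (if g y = false then 1 else 0) +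
          (if g x = false then 1 else 0) * (if g y = true then 1 else 0)) := by
        rw [Finset.sum_mul_sum, Finset.sum_mul_sum, ← Finset.sum_add_distrib]
        exact Finset.sum_congr rfl fun x _ => (Finset.sum_add_distrib).symm
    _ = ∑ x ∈ A, ∑ y ∈ B, (if g x ≠ g y then 1 else 0) := by
        exact Finset.sum_congr rfl fun x _ => Finset.sum_congr rfl fun y _ => (h x y).symm

lemma exists_perm {N : ℕ} {x y x' y' : Fin N} (hxy : x ≠ y) (hxy' : x' ≠ y') :
    ∃ σ : Equiv.Perm (Fin N), σ x = x' ∧ σ y = y' := by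
  refine ⟨(Equiv.swap x x').trans (Equiv.swap (Equiv.swap x x' y) y'), ?_, ?_⟩
  · simp only [Equiv.trans_apply, Equiv.swap_apply_left]
    rw [Equiv.swap_apply_of_ne_of_ne]
    · intro h
      exact hxy ((Equiv.swap x x').injective (by rw [Equiv.swap_apply_left, ← h]))
    · exact hxy'
  · simp only [Equiv.trans_apply, Equiv.swap_apply_left]

lemma D_const {N : ℕ} (na : ℕ) {x y x' y' : Fin N} (hxy : x ≠ y) (hxy' : x' ≠ y') :
    (((univ : Finset (Fin N → Bool)).filter fun g =>
        (univ.filter fun i => g i = true).card = na).filter fun g => g x ≠ g y).card =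
    (((univ : Finset (Fin N → Bool)).filter fun g =>
        (univ.filter fun i => g i = true).card = na).filter fun g => g x' ≠ g y').card := by
  obtain ⟨σ, hx, hy⟩ := exists_perm hxy' hxy
  refine Finset.card_bij' (fun g _ => g ∘ σ) (fun g _ => g ∘ σ.symm) ?_ ?_ ?_ ?_
  · intro g hg
    simp only [Finset.mem_filter, Finset.mem_univ, true_and] at hg ⊢
    refine ⟨?_, ?_⟩
    · rw [← hg.1]
      exact filter_perm_card σ (fun i => g i = true)
    · simpa [Function.comp, hx, hy] using hg.2
  · intro g hg
    simp only [Finset.mem_filter, Finset.mem_univ, true_and] at hg ⊢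
    constructor
    · rw [← hg.1]
      exact filter_perm_card σ.symm (fun i => g i = true)
    · have h1 : σ.symm x = x' := by rw [← hx, Equiv.symm_apply_apply]
      have h2 : σ.symm y = y' := by rw [← hy, Equiv.symm_apply_apply]
      simpa [Function.comp, h1, h2] using hg.2
  · intro g _; ext i; simp
  · intro g _; ext i; simp

lemma hdiag {N : ℕ} (A : Finset (Fin N)) (q : ℚ) :
    ∑ x ∈ A, ∑ y ∈ A, (if x = y then 0 else q) = (A.card : ℚ) * ((A.card : ℚ) - 1) * q := by
  have hinner : ∀ x ∈ A, ∑ y ∈ A, (if x = y then (0:ℚ) else q) = (A.card : ℚ) * q - q := by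
    intro x hx
    have h1 : ∀ y, (if x = y then (0:ℚ) else q) = q - (if x = y then q else 0) := by
      intro y; by_cases h : x = y <;> simp [h]
    simp only [h1]
    rw [Finset.sum_sub_distrib, Finset.sum_const, Finset.sum_ite_eq A x (fun _ => q), if_pos hx,
      nsmul_eq_mul]
  rw [Finset.sum_congr rfl hinner, Finset.sum_const, nsmul_eq_mul]
  ring

lemma aCnt_eq {N K : ℕ} (c : Fin N → Fin K) (g : Fin N → Bool) (k : Fin K) :
    aCnt c g k = ((univ.filter fun x => c x = k).filter fun x => g x = true).card := by
  unfold aCnt; congr 1; ext x; simp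

lemma bCnt_eq {N K : ℕ} (c : Fin N → Fin K) (g : Fin N → Bool) (k : Fin K) :
    bCnt c g k = ((univ.filter fun x => c x = k).filter fun x => g x = false).card := by
  unfold bCnt; congr 1; ext x; simp

/-- The permutation-null expectation of `R_{C₀}` equals
`(N - K + |C₀|) · 2 n_a n_b / (N (N-1))`. -/
theorem expectation_RC0_perm_null (K N na nb : ℕ) (hN : na + nb = N) (hN2 : 2 ≤ N)
    (c : Fin N → Fin K) (C0 : SimpleGraph (Fin K)) (m : Fin K → ℕ)
    (hm : ∀ k, m k = (univ.filter fun x => c x = k).card) (hmk : ∀ k, 0 < m k) :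
    (∑ g ∈ (univ.filter fun g : Fin N → Bool =>
        (univ.filter fun x => g x = true).card = na), RC0 c C0 m g) /
        ((univ.filter fun g : Fin N → Bool =>
          (univ.filter fun x => g x = true).card = na).card : ℚ) =
      ((N : ℚ) - (K : ℚ) + (C0.edgeFinset.card : ℚ)) * (2 * (na : ℚ) * (nb : ℚ)) /
        ((N : ℚ) * ((N : ℚ) - 1)) := by
  set S := (univ.filter fun g : Fin N → Bool =>
      (univ.filter fun x => g x = true).card = na) with hS
  have hmemS : ∀ g : Fin N → Bool, g ∈ S ↔ (univ.filter fun x => g x = true).card = na := by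
    intro g; rw [hS]; simp
  clear_value S
  obtain ⟨D, hDconst⟩ : ∃ D : ℕ, ∀ x y : Fin N, x ≠ y →
      (S.filter fun g => g x ≠ g y).card = D := by
    have hx0y0 : (⟨0, by omega⟩ : Fin N) ≠ (⟨1, by omega⟩ : Fin N) := by
      simp [Fin.ext_iff]
    refine ⟨(S.filter fun g => g (⟨0, by omega⟩ : Fin N) ≠ g (⟨1, by omega⟩ : Fin N)).card,
      fun x y hxy => ?_⟩
    rw [hS]
    exact D_const na hxy hx0y0
  have hsum_ind : ∀ x y : Fin N,
      ∑ g ∈ S, (if g x ≠ g y then (1:ℚ) else 0) = if x = y then 0 else (D:ℚ) := by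
    intro x y
    by_cases h : x = y
    · subst h; simp
    · rw [Finset.sum_boole]
      rw [if_neg h]
      norm_cast
      exact hDconst x y h
  have key : ∀ A B : Finset (Fin N),
      ∑ g ∈ S, (((A.filter fun x => g x = true).card : ℚ) *
          ((B.filter fun x => g x = false).card : ℚ) +
        ((B.filter fun x => g x = true).card : ℚ) *
          ((A.filter fun x => g x = false).card : ℚ)) =
      ∑ x ∈ A, ∑ y ∈ B, (if x = y then 0 else (D:ℚ)) := by
    intro A B
    have hg : ∀ g : Fin N → Bool,
        (((A.filter fun x => g x = true).card : ℚ) *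
            ((B.filter fun x => g x = false).card : ℚ) +
          ((B.filter fun x => g x = true).card : ℚ) *
            ((A.filter fun x => g x = false).card : ℚ)) =
        ∑ x ∈ A, ∑ y ∈ B, (if g x ≠ g y then (1:ℚ) else 0) := by
      intro g
      exact_mod_cast congrArg (Nat.cast : ℕ → ℚ) (pair_expand g A B)
    rw [Finset.sum_congr rfl fun g _ => hg g, Finset.sum_comm]
    refine Finset.sum_congr rfl fun x _ => ?_
    rw [Finset.sum_comm]
    exact Finset.sum_congr rfl fun y _ => hsum_ind x y
  have hb : ∀ g ∈ S, (univ.filter fun x => g x = false).card = nb := by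
    intro g hg
    rw [hmemS] at hg
    have h1 := Finset.card_filter_add_card_filter_not (s := (univ : Finset (Fin N)))
      (p := fun x => g x = true)
    have hfe : ((univ : Finset (Fin N)).filter fun x => ¬ g x = true) =
        (univ.filter fun x => g x = false) := by
      ext x; simp
    rw [hfe, hg, Finset.card_univ, Fintype.card_fin] at h1
    omega
  have hNN0 : (N:ℚ) * ((N:ℚ) - 1) ≠ 0 := by
    have : (2:ℚ) ≤ (N:ℚ) := by exact_mod_cast hN2
    intro h
    rcases mul_eq_zero.mp h with h1 | h1 <;> nlinarith
  have hSne : S.Nonempty := by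
    obtain ⟨t, -, ht⟩ := Finset.exists_subset_card_eq
      (s := (univ : Finset (Fin N))) (n := na)
      (by rw [Finset.card_univ, Fintype.card_fin]; omega)
    refine ⟨fun x => decide (x ∈ t), ?_⟩
    rw [hmemS]
    have h2 : (univ.filter fun x => decide (x ∈ t) = true) = t := by ext x; simp
    rw [h2]; exact ht
  have hT0 : (S.card : ℚ) ≠ 0 := by
    have := Finset.card_pos.mpr hSne
    positivity
  have hDT : (D:ℚ) * ((N:ℚ) * ((N:ℚ) - 1)) = (S.card : ℚ) * (2 * na * nb) := by
    have h1 := key univ univ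
    rw [hdiag, Finset.card_univ, Fintype.card_fin] at h1
    have h2 : ∑ g ∈ S, (((univ.filter fun x => g x = true).card : ℚ) *
          ((univ.filter fun x => g x = false).card : ℚ) +
        ((univ.filter fun x => g x = true).card : ℚ) *
          ((univ.filter fun x => g x = false).card : ℚ)) =
        (S.card : ℚ) * (2 * na * nb) := by
      rw [Finset.sum_congr rfl (fun g hg => by
        rw [(hmemS g).mp hg, hb g hg]), Finset.sum_const, nsmul_eq_mul]
      ring
    rw [h2] at h1
    linarith [h1]
  have hmN : ∑ k, (m k : ℚ) = (N : ℚ) := by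
    have h : ∑ k, m k = N := by
      have h2 := Finset.card_eq_sum_card_fiberwise
        (f := c) (s := (univ : Finset (Fin N))) (t := (univ : Finset (Fin K)))
        (fun x _ => Finset.mem_univ (c x))
      rw [Finset.card_univ, Fintype.card_fin] at h2
      rw [h2]
      refine Finset.sum_congr rfl fun k _ => ?_
      rw [hm k]
    exact_mod_cast h
  have hcat : ∀ k : Fin K,
      ∑ g ∈ S, 2 * (aCnt c g k : ℚ) * (bCnt c g k : ℚ) / (m k : ℚ) =
        ((m k : ℚ) - 1) * D := by
    intro k
    have hterm : ∀ g : Fin N → Bool, 2 * (aCnt c g k : ℚ) * (bCnt c g k : ℚ) =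
        ((((univ.filter fun x => c x = k)).filter fun x => g x = true).card : ℚ) *
            ((((univ.filter fun x => c x = k)).filter fun x => g x = false).card : ℚ) +
          ((((univ.filter fun x => c x = k)).filter fun x => g x = true).card : ℚ) *
            ((((univ.filter fun x => c x = k)).filter fun x => g x = false).card : ℚ) := by
      intro g; rw [aCnt_eq, bCnt_eq]; ring
    rw [← Finset.sum_div, Finset.sum_congr rfl fun g _ => hterm g,
      key (univ.filter fun x => c x = k) (univ.filter fun x => c x = k), hdiag, ← hm k]
    have hmk0 : ((m k : ℚ)) ≠ 0 := by
      have := hmk k; positivity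
    field_simp
  have h1 : ∑ g ∈ S, (∑ k, 2 * (aCnt c g k : ℚ) * (bCnt c g k : ℚ) / (m k : ℚ)) =
      ((N:ℚ) - K) * D := by
    rw [Finset.sum_comm, Finset.sum_congr rfl fun k _ => hcat k, ← Finset.sum_mul,
      Finset.sum_sub_distrib, hmN, Finset.sum_const, Finset.card_univ, Fintype.card_fin,
      nsmul_eq_mul]
    ring
  have hdart : ∀ dd : C0.Dart, ∑ g ∈ S,
      ((aCnt c g dd.toProd.1 : ℚ) * (bCnt c g dd.toProd.2 : ℚ) +
        (aCnt c g dd.toProd.2 : ℚ) * (bCnt c g dd.toProd.1 : ℚ)) /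
        ((m dd.toProd.1 : ℚ) * (m dd.toProd.2 : ℚ)) = D := by
    intro dd
    have huv : dd.toProd.1 ≠ dd.toProd.2 := dd.adj.ne
    set u := dd.toProd.1 with hu
    set v := dd.toProd.2 with hv
    have hterm : ∀ g : Fin N → Bool,
        (aCnt c g u : ℚ) * (bCnt c g v : ℚ) + (aCnt c g v : ℚ) * (bCnt c g u : ℚ) =
        ((((univ.filter fun x => c x = u)).filter fun x => g x = true).card : ℚ) *
            ((((univ.filter fun x => c x = v)).filter fun x => g x = false).card : ℚ) +
          ((((univ.filter fun x => c x = v)).filter fun x => g x = true).card : ℚ) *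
            ((((univ.filter fun x => c x = u)).filter fun x => g x = false).card : ℚ) := by
      intro g; rw [aCnt_eq, bCnt_eq, aCnt_eq, bCnt_eq]
    have hR : ∑ x ∈ (univ.filter fun x => c x = u), ∑ y ∈ (univ.filter fun x => c x = v),
        (if x = y then (0:ℚ) else (D:ℚ)) = (m u : ℚ) * (m v : ℚ) * D := by
      have hinner2 : ∀ x ∈ (univ.filter fun x => c x = u),
          ∑ y ∈ (univ.filter fun x => c x = v), (if x = y then (0:ℚ) else (D:ℚ)) =
            (m v : ℚ) * D := by
        intro x hx
        have hcx : c x = u := (Finset.mem_filter.mp hx).2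
        have hne : ∀ y ∈ (univ.filter fun x => c x = v),
            (if x = y then (0:ℚ) else (D:ℚ)) = (D:ℚ) := by
          intro y hy
          refine if_neg fun h => huv ?_
          rw [← hcx, h]
          exact (Finset.mem_filter.mp hy).2
        rw [Finset.sum_congr rfl hne, Finset.sum_const, ← hm v, nsmul_eq_mul]
      rw [Finset.sum_congr rfl hinner2, Finset.sum_const, ← hm u, nsmul_eq_mul]
      ring
    have hmu0 : ((m u : ℚ)) ≠ 0 := by have := hmk u; positivity
    have hmv0 : ((m v : ℚ)) ≠ 0 := by have := hmk v; positivity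
    rw [← Finset.sum_div, Finset.sum_congr rfl fun g _ => hterm g,
      key (univ.filter fun x => c x = u) (univ.filter fun x => c x = v), hR]
    field_simp
  have h2 : ∑ g ∈ S, (∑ dd : C0.Dart,
      ((aCnt c g dd.toProd.1 : ℚ) * (bCnt c g dd.toProd.2 : ℚ) +
        (aCnt c g dd.toProd.2 : ℚ) * (bCnt c g dd.toProd.1 : ℚ)) /
        ((m dd.toProd.1 : ℚ) * (m dd.toProd.2 : ℚ))) / 2 =
      (C0.edgeFinset.card : ℚ) * D := by
    rw [← Finset.sum_div, Finset.sum_comm, Finset.sum_congr rfl fun dd _ => hdart dd,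
      Finset.sum_const, nsmul_eq_mul, Finset.card_univ,
      SimpleGraph.dart_card_eq_twice_card_edges]
    push_cast
    ring
  have hsum : ∑ g ∈ S, RC0 c C0 m g = ((N:ℚ) - K + (C0.edgeFinset.card : ℚ)) * D := by
    simp only [RC0]
    rw [Finset.sum_add_distrib, h1, h2]
    ring
  rw [hsum]
  rw [div_eq_div_iff hT0 hNN0]
  linear_combination ((N:ℚ) - K + (C0.edgeFinset.card : ℚ)) * hDT
end

section
/- The permutation-null expectation of T_{C₀} = Σ_{u=1}^K n_{au} n_{bu} + Σ_{(u,v)∈C₀} (n_{au} n_{bv} + n_{bu} n_{av}) equals (Σ_{u=1}^K m_u(m_u−1) + 2 Σ_{(u,v)∈C₀} m_u m_v) · n_a n_b/(N(N−1)). -/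
open scoped Classical
open Finset



lemma card_filter_comp {N : ℕ} (σ : Equiv.Perm (Fin N)) (g : Fin N → Bool) :
    (univ.filter fun t => g (σ t) = true).card = (univ.filter fun t => g t = true).card := by
  apply Finset.card_bij' (fun t _ => σ t) (fun t _ => σ.symm t) <;> simp

lemma cnt_swap {N na : ℕ} {x y x' y' : Fin N} (hxy : x ≠ y) (hxy' : x' ≠ y') :
    ((univ.filter fun g : Fin N → Bool =>
      (univ.filter fun t => g t = true).card = na).filter
        fun g => g x = true ∧ g y = false).card =
    ((univ.filter fun g : Fin N → Bool =>
      (univ.filter fun t => g t = true).card = na).filter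
        fun g => g x' = true ∧ g y' = false).card := by
  set σ₁ := Equiv.swap x' x with hσ₁
  have h1 : σ₁ x' = x := Equiv.swap_apply_left _ _
  have hne : x ≠ σ₁ y' := by
    intro h
    apply hxy'
    have := σ₁.injective (a₁ := x') (a₂ := y')
    rw [h1, h] at this
    exact (this rfl).symm ▸ rfl
  set σ₂ := Equiv.swap (σ₁ y') y with hσ₂
  set σ := σ₁.trans σ₂ with hσ
  have hx : σ x' = x := by
    simp only [hσ, Equiv.trans_apply, h1]
    exact Equiv.swap_apply_of_ne_of_ne hne hxy
  have hy : σ y' = y := by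
    simp only [hσ, Equiv.trans_apply]
    exact Equiv.swap_apply_left _ _
  apply Finset.card_bij' (fun g _ => g ∘ σ) (fun g _ => g ∘ σ.symm)
  · intro g hg
    simp only [mem_filter, mem_univ, true_and, Function.comp] at hg ⊢
    refine ⟨?_, ?_, ?_⟩
    · rw [card_filter_comp σ]; exact hg.1
    · rw [hx]; exact hg.2.1
    · rw [hy]; exact hg.2.2
  · intro g hg
    simp only [mem_filter, mem_univ, true_and, Function.comp] at hg ⊢
    refine ⟨?_, ?_, ?_⟩
    · rw [card_filter_comp σ.symm]; exact hg.1
    · have : σ.symm x = x' := by rw [← hx]; simp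
      rw [this]; exact hg.2.1
    · have : σ.symm y = y' := by rw [← hy]; simp
      rw [this]; exact hg.2.2
  · intro g _; funext t; simp
  · intro g _; funext t; simp

lemma sum_prod {N K na : ℕ} (c : Fin N → Fin K) (u v : Fin K) :
    ∑ g ∈ (univ.filter fun g : Fin N → Bool =>
        (univ.filter fun t => g t = true).card = na), aCnt c g u * bCnt c g v
    = ∑ x : Fin N, ∑ y : Fin N, (if c x = u ∧ c y = v then
        ((univ.filter fun g : Fin N → Bool =>
          (univ.filter fun t => g t = true).card = na).filter
            fun g => g x = true ∧ g y = false).card else 0) := by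
  have h1 : ∀ g : Fin N → Bool, aCnt c g u * bCnt c g v =
      ∑ x : Fin N, ∑ y : Fin N,
        (if (c x = u ∧ g x = true) ∧ (c y = v ∧ g y = false) then 1 else 0) := by
    intro g
    unfold aCnt bCnt
    rw [Finset.card_filter, Finset.card_filter, Finset.sum_mul_sum]
    refine Finset.sum_congr rfl fun x _ => Finset.sum_congr rfl fun y _ => ?_
    split_ifs <;> simp_all
  simp only [h1]
  rw [Finset.sum_comm]
  refine Finset.sum_congr rfl fun x _ => ?_
  rw [Finset.sum_comm]
  refine Finset.sum_congr rfl fun y _ => ?_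
  by_cases hx : c x = u
  · by_cases hy : c y = v
    · rw [if_pos ⟨hx, hy⟩, Finset.card_filter]
      exact Finset.sum_congr rfl fun g _ => by simp [hx, hy]
    · rw [if_neg (by tauto)]
      exact Finset.sum_eq_zero fun g _ => by simp [hy]
  · rw [if_neg (by tauto)]
    exact Finset.sum_eq_zero fun g _ => by simp [hx]

/-- The statistic `T_{C₀} = Σ_u n_{au} n_{bu} + Σ_{(u,v)∈C₀} (n_{au} n_{bv} + n_{bu} n_{av})`
(the sum over unordered edges of `C₀` written as half the sum over darts). -/
noncomputable def TC0 {N K : ℕ} (c : Fin N → Fin K) (C0 : SimpleGraph (Fin K))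
    (g : Fin N → Bool) : ℚ :=
  (∑ u, (aCnt c g u : ℚ) * (bCnt c g u : ℚ)) +
    (∑ dd : C0.Dart,
        ((aCnt c g dd.toProd.1 : ℚ) * (bCnt c g dd.toProd.2 : ℚ) +
          (bCnt c g dd.toProd.1 : ℚ) * (aCnt c g dd.toProd.2 : ℚ))) / 2

/-- The permutation-null expectation of `T_{C₀}` equals
`(Σ_u m_u (m_u - 1) + 2 Σ_{(u,v)∈C₀} m_u m_v) · n_a n_b / (N (N-1))`,
where `2 Σ_{(u,v)∈C₀} m_u m_v` is written as the sum over darts of `C₀`. -/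
theorem expectation_TC0_perm_null (K N na nb : ℕ) (hN : na + nb = N) (hN2 : 2 ≤ N)
    (c : Fin N → Fin K) (C0 : SimpleGraph (Fin K)) (m : Fin K → ℕ)
    (hm : ∀ k, m k = (univ.filter fun x => c x = k).card) (hmk : ∀ k, 0 < m k) :
    (∑ g ∈ (univ.filter fun g : Fin N → Bool =>
        (univ.filter fun x => g x = true).card = na), TC0 c C0 g) /
        ((univ.filter fun g : Fin N → Bool =>
          (univ.filter fun x => g x = true).card = na).card : ℚ) =
      ((∑ u, (m u : ℚ) * ((m u : ℚ) - 1)) +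
          (∑ dd : C0.Dart, (m dd.toProd.1 : ℚ) * (m dd.toProd.2 : ℚ))) *
        ((na : ℚ) * (nb : ℚ)) / ((N : ℚ) * ((N : ℚ) - 1)) := by
  have hnaN : na ≤ N := by omega
  set S := (univ.filter fun g : Fin N → Bool =>
      (univ.filter fun x => g x = true).card = na) with hSdef
  set x0 : Fin N := ⟨0, by omega⟩ with hx0
  set y0 : Fin N := ⟨1, by omega⟩ with hy0
  have h01 : x0 ≠ y0 := by simp [hx0, hy0, Fin.ext_iff]
  obtain ⟨c0, hcnt⟩ : ∃ c0 : ℕ, ∀ x y : Fin N, x ≠ y →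
      (S.filter fun g => g x = true ∧ g y = false).card = c0 :=
    ⟨(S.filter fun g => g x0 = true ∧ g y0 = false).card,
      fun x y hxy => cnt_swap hxy h01⟩
  have hdiag : ∀ x : Fin N,
      (S.filter fun g => g x = true ∧ g x = false).card = 0 := by
    intro x
    have he : (S.filter fun g => g x = true ∧ g x = false) = ∅ := by
      ext g
      simp only [mem_filter, Finset.notMem_empty, iff_false, not_and]
      intro _ h1 h2
      rw [h1] at h2; exact Bool.noConfusion h2
    rw [he, Finset.card_empty]
  have hnbcnt : ∀ g ∈ S, (univ.filter fun t => g t = false).card = nb := by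
    intro g hg
    have hgna : (univ.filter fun t => g t = true).card = na := (mem_filter.mp hg).2
    have hcompl : (univ.filter fun t => g t = false)
        = univ \ (univ.filter fun t => g t = true) := by
      ext t; simp
    rw [hcompl, Finset.card_sdiff_of_subset (filter_subset _ _), hgna, card_univ, Fintype.card_fin]
    omega
  -- S is nonempty
  have hS0 : S.Nonempty := by
    obtain ⟨s, hs, hcard⟩ := Finset.exists_subset_card_eq
      (s := (univ : Finset (Fin N))) (n := na)
      (by rw [card_univ, Fintype.card_fin]; omega)
    refine ⟨fun i => decide (i ∈ s), ?_⟩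
    rw [hSdef, mem_filter]
    refine ⟨mem_univ _, ?_⟩
    have he : (univ.filter fun x : Fin N => decide (x ∈ s) = true) = s := by
      ext t; simp
    rw [he]; exact hcard
  -- key counting identity
  have key : N * ((N - 1) * c0) = na * nb * S.card := by
    have hrow : ∀ x : Fin N,
        (∑ y : Fin N, (S.filter fun g => g x = true ∧ g y = false).card)
          = (N - 1) * c0 := by
      intro x
      rw [← Finset.add_sum_erase _ _ (mem_univ x), hdiag x, zero_add,
        Finset.sum_congr rfl (fun y hy => hcnt x y (Ne.symm (Finset.ne_of_mem_erase hy))),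
        Finset.sum_const, smul_eq_mul, Finset.card_erase_of_mem (mem_univ x),
        card_univ, Fintype.card_fin]
    have lhs1 : (∑ x : Fin N, ∑ y : Fin N,
        (S.filter fun g => g x = true ∧ g y = false).card) = N * ((N - 1) * c0) := by
      rw [Finset.sum_congr rfl (fun x _ => hrow x), Finset.sum_const, smul_eq_mul,
        card_univ, Fintype.card_fin]
    rw [← lhs1]
    simp only [Finset.card_filter]
    have swap1 : ∀ x : Fin N, (∑ y : Fin N, ∑ g ∈ S,
        (if g x = true ∧ g y = false then 1 else 0))
        = ∑ g ∈ S, ∑ y : Fin N, (if g x = true ∧ g y = false then 1 else 0) :=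
      fun x => Finset.sum_comm
    rw [Finset.sum_congr rfl fun x _ => swap1 x, Finset.sum_comm]
    have hg1 : ∀ g ∈ S, (∑ x : Fin N, ∑ y : Fin N,
        (if g x = true ∧ g y = false then 1 else 0)) = na * nb := by
      intro g hg
      have hgna : (univ.filter fun t => g t = true).card = na := (mem_filter.mp hg).2
      have inner : ∀ x : Fin N,
          (∑ y : Fin N, if g x = true ∧ g y = false then 1 else 0)
          = if g x = true then nb else 0 := by
        intro x
        by_cases hgx : g x = true
        · have hcg : ∀ y ∈ (univ : Finset (Fin N)),
              (if g x = true ∧ g y = false then 1 else 0)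
              = if g y = false then 1 else 0 := fun y _ => by simp [hgx]
          rw [if_pos hgx, Finset.sum_congr rfl hcg, ← Finset.card_filter, hnbcnt g hg]
        · simp [hgx]
      rw [Finset.sum_congr rfl fun x _ => inner x, ← Finset.sum_filter,
        Finset.sum_const, smul_eq_mul, hgna]
    rw [Finset.sum_congr rfl hg1, Finset.sum_const, smul_eq_mul]
    ring
  -- within-category sum
  have hwithin : ∀ u : Fin K,
      (∑ g ∈ S, aCnt c g u * bCnt c g u) = m u * ((m u - 1) * c0) := by
    intro u
    have hsp := sum_prod (na := na) c u u
    rw [← hSdef] at hsp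
    rw [hsp]
    have hrow : ∀ x : Fin N, (∑ y : Fin N, if c x = u ∧ c y = u then
        (S.filter fun g => g x = true ∧ g y = false).card else 0)
        = if c x = u then (m u - 1) * c0 else 0 := by
      intro x
      by_cases hx : c x = u
      · have hcg : ∀ y ∈ univ.erase x, (if c x = u ∧ c y = u then
            (S.filter fun g => g x = true ∧ g y = false).card else 0)
            = if c y = u then c0 else 0 := by
          intro y hy
          by_cases hyu : c y = u
          · rw [if_pos ⟨hx, hyu⟩, if_pos hyu,
              hcnt x y (Ne.symm (Finset.ne_of_mem_erase hy))]
          · rw [if_neg (by tauto), if_neg hyu]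
        rw [if_pos hx, ← Finset.add_sum_erase _ _ (mem_univ x), if_pos ⟨hx, hx⟩,
          hdiag x, zero_add, Finset.sum_congr rfl hcg, ← Finset.sum_filter,
          Finset.sum_const, smul_eq_mul]
        congr 1
        rw [Finset.filter_erase, Finset.card_erase_of_mem
          (mem_filter.mpr ⟨mem_univ x, hx⟩), ← hm u]
      · rw [if_neg hx]
        exact Finset.sum_eq_zero fun y _ => if_neg (by tauto)
    rw [Finset.sum_congr rfl fun x _ => hrow x, ← Finset.sum_filter,
      Finset.sum_const, smul_eq_mul, ← hm u]
  -- cross-category sum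
  have hcross : ∀ u v : Fin K, u ≠ v →
      (∑ g ∈ S, aCnt c g u * bCnt c g v) = m u * (m v * c0) := by
    intro u v huv
    have hsp := sum_prod (na := na) c u v
    rw [← hSdef] at hsp
    rw [hsp]
    have hrow : ∀ x : Fin N, (∑ y : Fin N, if c x = u ∧ c y = v then
        (S.filter fun g => g x = true ∧ g y = false).card else 0)
        = if c x = u then m v * c0 else 0 := by
      intro x
      by_cases hx : c x = u
      · have hcg : ∀ y ∈ (univ : Finset (Fin N)), (if c x = u ∧ c y = v then
            (S.filter fun g => g x = true ∧ g y = false).card else 0)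
            = if c y = v then c0 else 0 := by
          intro y hy
          by_cases hyv : c y = v
          · rw [if_pos ⟨hx, hyv⟩, if_pos hyv,
              hcnt x y (fun h => huv (by rw [← hx, h, hyv]))]
          · rw [if_neg (by tauto), if_neg hyv]
        rw [if_pos hx, Finset.sum_congr rfl hcg, ← Finset.sum_filter,
          Finset.sum_const, smul_eq_mul, ← hm v]
      · rw [if_neg hx]
        exact Finset.sum_eq_zero fun y _ => if_neg (by tauto)
    rw [Finset.sum_congr rfl fun x _ => hrow x, ← Finset.sum_filter,
      Finset.sum_const, smul_eq_mul, ← hm u]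
  -- total sum of TC0 over S
  set M : ℚ := (∑ u, (m u : ℚ) * ((m u : ℚ) - 1)) +
      (∑ dd : C0.Dart, (m dd.toProd.1 : ℚ) * (m dd.toProd.2 : ℚ)) with hM
  have hsum : (∑ g ∈ S, TC0 c C0 g) = (c0 : ℚ) * M := by
    unfold TC0
    rw [Finset.sum_add_distrib]
    have part1 : (∑ g ∈ S, ∑ u, (aCnt c g u : ℚ) * (bCnt c g u : ℚ))
        = (c0 : ℚ) * (∑ u, (m u : ℚ) * ((m u : ℚ) - 1)) := by
      rw [Finset.sum_comm, Finset.mul_sum]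
      refine Finset.sum_congr rfl fun u _ => ?_
      have e1 : (∑ g ∈ S, (aCnt c g u : ℚ) * (bCnt c g u : ℚ))
          = ((∑ g ∈ S, aCnt c g u * bCnt c g u : ℕ) : ℚ) := by
        push_cast; rfl
      rw [e1, hwithin u]
      have h1 : (1 : ℕ) ≤ m u := hmk u
      push_cast [Nat.cast_sub h1]
      ring
    have part2 : (∑ g ∈ S, (∑ dd : C0.Dart,
          ((aCnt c g dd.toProd.1 : ℚ) * (bCnt c g dd.toProd.2 : ℚ) +
            (bCnt c g dd.toProd.1 : ℚ) * (aCnt c g dd.toProd.2 : ℚ))) / 2)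
        = (c0 : ℚ) * (∑ dd : C0.Dart, (m dd.toProd.1 : ℚ) * (m dd.toProd.2 : ℚ)) := by
      rw [← Finset.sum_div, Finset.sum_comm, Finset.mul_sum]
      rw [Finset.sum_div]
      refine Finset.sum_congr rfl fun dd _ => ?_
      have hne : dd.toProd.1 ≠ dd.toProd.2 := dd.adj.ne
      have e1 : (∑ g ∈ S, ((aCnt c g dd.toProd.1 : ℚ) * (bCnt c g dd.toProd.2 : ℚ) +
            (bCnt c g dd.toProd.1 : ℚ) * (aCnt c g dd.toProd.2 : ℚ)))
          = ((∑ g ∈ S, aCnt c g dd.toProd.1 * bCnt c g dd.toProd.2 : ℕ) : ℚ) +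
            ((∑ g ∈ S, aCnt c g dd.toProd.2 * bCnt c g dd.toProd.1 : ℕ) : ℚ) := by
        rw [Nat.cast_sum, Nat.cast_sum, ← Finset.sum_add_distrib]
        refine Finset.sum_congr rfl fun g _ => ?_
        push_cast
        ring
      rw [e1, hcross _ _ hne, hcross _ _ hne.symm]
      push_cast
      ring
    rw [part1, part2, hM]
    ring
  -- final algebra
  have hScard : ((S.card : ℚ)) ≠ 0 := by
    exact_mod_cast hS0.card_pos.ne'
  have hNden : ((N : ℚ) * ((N : ℚ) - 1)) ≠ 0 := by
    have h2 : (2 : ℚ) ≤ (N : ℚ) := by exact_mod_cast hN2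
    have : (N : ℚ) ≠ 0 := by linarith
    have : (N : ℚ) - 1 ≠ 0 := by intro h; nlinarith
    exact mul_ne_zero (by linarith) this
  have keyQ : (N : ℚ) * (((N : ℚ) - 1) * (c0 : ℚ))
      = (na : ℚ) * (nb : ℚ) * (S.card : ℚ) := by
    have h1 : (1 : ℕ) ≤ N := by omega
    have := key
    have hcast : ((N * ((N - 1) * c0) : ℕ) : ℚ) = ((na * nb * S.card : ℕ) : ℚ) := by
      exact_mod_cast congrArg (Nat.cast : ℕ → ℚ) this
    push_cast [Nat.cast_sub h1] at hcast
    linarith [hcast]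
  rw [hsum, div_eq_div_iff hScard hNden]
  linear_combination M * keyQ
end
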